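/- For a > 0, b > 0, the function φ_l(t) := e^{2t/a}(1 - at/b)^{2b/a²} is a strictly decreasing bijection from (0, b/a) onto (0, 1). -/

import Mathlib

open Set Real

/-- `φ_l(t) = e^{2t/a} (1 - at/b)^{2b/a²}` is a strictly decreasing bijection
from `(0, b/a)` onto `(0, 1)`. -/
theorem stmt5 (a b : ℝ) (ha : 0 < a) (hb : 0 < b) :
    StrictAntiOn
        (fun t : ℝ => Real.exp (2 * t / a) * (1 - a * t / b) ^ (2 * b / a ^ 2))
        (Set.Ioo 0 (b / a)) ∧
      Set.BijOn
        (fun t : ℝ => Real.exp (2 * t / a) * (1 - a * t / b) ^ (2 * b / a ^ 2))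
        (Set.Ioo 0 (b / a)) (Set.Ioo 0 1) := by
  set c : ℝ := 2 * b / a ^ 2 with hc
  set f : ℝ → ℝ := fun t => Real.exp (2 * t / a) * (1 - a * t / b) ^ c with hf
  have ha' : a ≠ 0 := ha.ne'
  have hb' : b ≠ 0 := hb.ne'
  have hcpos : 0 < c := by positivity
  have hcont : Continuous f := by
    apply Continuous.mul
    · exact Real.continuous_exp.comp (by continuity)
    · exact (by continuity : Continuous fun t : ℝ => 1 - a * t / b).rpow_const
        (fun x => Or.inr hcpos.le)
  have hderiv : ∀ t ∈ Set.Ioo (0 : ℝ) (b / a),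
      HasDerivAt f
        (Real.exp (2 * t / a) * (2 / a) * (1 - a * t / b) ^ c +
          Real.exp (2 * t / a) * (c * (1 - a * t / b) ^ (c - 1) * (-(a / b)))) t := by
    intro t ht
    have hupos : (0 : ℝ) < 1 - a * t / b := by
      have : a * t < b := by
        have := ht.2
        calc a * t < a * (b / a) := by exact (mul_lt_mul_iff_right₀ ha).2 this
        _ = b := by field_simp
      have : a * t / b < 1 := (div_lt_one hb).2 this
      linarith
    have h1 : HasDerivAt (fun t : ℝ => a * t / b) (a / b) t := by
      simpa using ((hasDerivAt_id t).const_mul a).div_const b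
    have hu : HasDerivAt (fun t : ℝ => 1 - a * t / b) (-(a / b)) t := h1.const_sub 1
    have hrp : HasDerivAt (fun t : ℝ => (1 - a * t / b) ^ c)
        (c * (1 - a * t / b) ^ (c - 1) * (-(a / b))) t := by
      have := hu.rpow_const (p := c) (Or.inl hupos.ne')
      convert this using 1; ring
    have h2 : HasDerivAt (fun t : ℝ => 2 * t / a) (2 / a) t := by
      simpa using ((hasDerivAt_id t).const_mul 2).div_const a
    have hexp : HasDerivAt (fun t : ℝ => Real.exp (2 * t / a))
        (Real.exp (2 * t / a) * (2 / a)) t := h2.exp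
    rw [hf]; exact hexp.mul hrp
  have hderiv_neg : ∀ t ∈ Set.Ioo (0 : ℝ) (b / a), deriv f t < 0 := by
    intro t ht
    have hupos : (0 : ℝ) < 1 - a * t / b := by
      have : a * t < b := by
        calc a * t < a * (b / a) := by exact (mul_lt_mul_iff_right₀ ha).2 ht.2
        _ = b := by field_simp
      have : a * t / b < 1 := (div_lt_one hb).2 this
      linarith
    have hult1 : 1 - a * t / b < 1 := by
      have : 0 < a * t / b := div_pos (mul_pos ha ht.1) hb
      linarith
    rw [(hderiv t ht).deriv]
    have hpow : (1 - a * t / b) ^ c < (1 - a * t / b) ^ (c - 1) :=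
      Real.rpow_lt_rpow_of_exponent_gt hupos hult1 (by linarith)
    have hca : c * (a / b) = 2 / a := by
      rw [hc]; field_simp
    have hexp_pos : 0 < Real.exp (2 * t / a) := Real.exp_pos _
    have key : Real.exp (2 * t / a) * (2 / a) * (1 - a * t / b) ^ c +
        Real.exp (2 * t / a) * (c * (1 - a * t / b) ^ (c - 1) * (-(a / b)))
        = Real.exp (2 * t / a) * (2 / a) *
          ((1 - a * t / b) ^ c - (1 - a * t / b) ^ (c - 1)) := by
      rw [← hca]; ring
    rw [key]
    have h2a : 0 < 2 / a := by positivity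
    have := mul_pos hexp_pos h2a
    nlinarith [hpow, this]
  have hanti : StrictAntiOn f (Set.Icc 0 (b / a)) := by
    apply strictAntiOn_of_deriv_neg (convex_Icc _ _) hcont.continuousOn
    intro x hx
    rw [interior_Icc] at hx
    exact hderiv_neg x hx
  have hf0 : f 0 = 1 := by simp [hf]
  have hfba : f (b / a) = 0 := by
    have : 1 - a * (b / a) / b = 0 := by field_simp; norm_num
    simp [hf, this, Real.zero_rpow hcpos.ne']
  have hba_pos : 0 < b / a := by positivity
  have hsub : Set.Ioo (0 : ℝ) (b / a) ⊆ Set.Icc 0 (b / a) := Set.Ioo_subset_Icc_self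
  have hantiIoo : StrictAntiOn f (Set.Ioo 0 (b / a)) := fun x hx y hy hxy =>
    hanti (hsub hx) (hsub hy) hxy
  refine ⟨hantiIoo, ?_, ?_, ?_⟩
  · intro t ht
    constructor
    · have := hanti (hsub ht) (Set.right_mem_Icc.2 hba_pos.le) ht.2
      rw [hfba] at this; exact this
    · have := hanti (Set.left_mem_Icc.2 hba_pos.le) (hsub ht) ht.1
      rw [hf0] at this; exact this
  · exact hantiIoo.injOn
  · have := intermediate_value_Ioo' hba_pos.le hcont.continuousOn (a := 0) (b := b / a)
    rw [hf0, hfba] at this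
    exact fun y hy => this hy
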